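/- For every α ∈ (0,1) and β > 1, and x > 0: D_{α,β}(x) = (1/Γ(β−1)) ∫_0^1 (1−t)^{β−2} D_{α,1}(xt) dt, where D_{α,β}(x) = ∑_{n≥1} x^{αn-1}/Γ(β+αn-1) − ∑_{n≥0} x^{αn}/Γ(β+αn). -/

import Mathlib

open Real MeasureTheory

lemma betaEqOn {u v : ℝ} : Set.EqOn (fun t : ℝ => ((t:ℂ)) ^ ((u:ℂ)-1) * ((1:ℂ)-t) ^ ((v:ℂ)-1))
    (fun t : ℝ => (((t ^ (u-1) * (1-t) ^ (v-1) : ℝ)) : ℂ)) (Set.Icc 0 1) := by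
  intro t ht
  simp only
  rw [Complex.ofReal_mul, Complex.ofReal_cpow ht.1, Complex.ofReal_cpow (by linarith [ht.2])]
  push_cast
  ring_nf

lemma betaIntgbl {u v : ℝ} (hu : 0 < u) (hv : 0 < v) :
    IntervalIntegrable (fun t : ℝ => t ^ (u-1) * (1-t) ^ (v-1)) volume 0 1 := by
  have h := Complex.betaIntegral_convergent (u := (u:ℂ)) (v := (v:ℂ)) (by simpa) (by simpa)
  rw [intervalIntegrable_iff_integrableOn_Ioc_of_le (by norm_num)] at h ⊢
  have h2 : IntegrableOn (fun t : ℝ => (((t ^ (u-1) * (1-t) ^ (v-1) : ℝ)) : ℂ)) (Set.Ioc 0 1) :=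
    h.congr_fun (fun t ht => betaEqOn (u := u) (v := v) (Set.Ioc_subset_Icc_self ht))
      measurableSet_Ioc
  simpa [IntegrableOn] using h2.re

lemma betaVal {u v : ℝ} (hu : 0 < u) (hv : 0 < v) :
    ∫ t in (0:ℝ)..1, t ^ (u-1) * (1-t) ^ (v-1) = Gamma u * Gamma v / Gamma (u+v) := by
  have h := Complex.Gamma_mul_Gamma_eq_betaIntegral (s := (u:ℂ)) (t := (v:ℂ)) (by simpa) (by simpa)
  rw [Complex.betaIntegral] at h
  have hcongr : ∫ t in (0:ℝ)..1, ((t:ℂ)) ^ ((u:ℂ)-1) * ((1:ℂ)-t) ^ ((v:ℂ)-1)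
      = ((∫ t in (0:ℝ)..1, t ^ (u-1) * (1-t) ^ (v-1) : ℝ) : ℂ) := by
    rw [intervalIntegral.integral_congr (g := fun t : ℝ => (((t ^ (u-1) * (1-t) ^ (v-1) : ℝ)) : ℂ))
      (by simpa [Set.uIcc_of_le] using betaEqOn (u := u) (v := v))]
    exact intervalIntegral.integral_ofReal
  rw [hcongr, ← Complex.ofReal_add, Complex.Gamma_ofReal, Complex.Gamma_ofReal,
    Complex.Gamma_ofReal, ← Complex.ofReal_mul, ← Complex.ofReal_mul] at h
  have h' := Complex.ofReal_inj.mp h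
  have hG : Gamma (u+v) ≠ 0 := (Gamma_pos_of_pos (by linarith)).ne'
  field_simp
  linarith [h']


lemma gamma_lb {s : ℝ} (hs : 2 ≤ s) : (Nat.factorial (Nat.floor s - 1) : ℝ) ≤ Gamma s := by
  have hfl : 2 ≤ Nat.floor s := Nat.le_floor (by exact_mod_cast hs)
  have h1 : Gamma ((Nat.floor s : ℝ)) ≤ Gamma s := by
    rcases eq_or_lt_of_le (Nat.floor_le (by linarith) : (Nat.floor s : ℝ) ≤ s) with h | h
    · rw [h]
    · exact (Real.Gamma_strictMonoOn_Ici (Set.mem_Ici.mpr (by exact_mod_cast hfl))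
        (Set.mem_Ici.mpr (by linarith)) h).le
  have h2 : ((Nat.floor s : ℝ)) = ((Nat.floor s - 1 : ℕ) : ℝ) + 1 := by
    have : (1:ℕ) ≤ Nat.floor s := by omega
    push_cast [this]
    ring
  rw [h2, Real.Gamma_nat_eq_factorial] at h1
  exact h1

lemma summableAux {α b c y : ℝ} (hα : 0 < α) (hb : 0 < b) (hy : 0 < y) :
    Summable (fun n : ℕ => y ^ (c + α * n) / Gamma (b + α * n)) := by
  set r := y ^ α with hr
  have hrpos : 0 < r := rpow_pos_of_pos hy α
  set M : ℝ := max 1 ((2*r) ^ (α⁻¹)) with hM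
  have hM1 : 1 ≤ M := le_max_left _ _
  have hMα : 2 * r ≤ M ^ α := by
    rcases le_total (2*r) 1 with h | h
    · calc 2*r ≤ 1 := h
        _ = (1:ℝ) ^ α := (one_rpow α).symm
        _ ≤ M ^ α := rpow_le_rpow (by norm_num) hM1 hα.le
    · calc 2*r = ((2*r) ^ α⁻¹) ^ α := (Real.rpow_inv_rpow (by linarith) hα.ne').symm
        _ ≤ M ^ α := rpow_le_rpow (rpow_nonneg (by linarith) _) (le_max_right _ _) hα.le
  -- K with M ^ k ≤ k! for k ≥ K
  have hsum := Real.summable_pow_div_factorial M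
  have htend := hsum.tendsto_atTop_zero
  have hev : ∀ᶠ k : ℕ in Filter.atTop, M ^ k / Nat.factorial k ≤ 1 :=
    htend.eventually_le_const (by norm_num)
  obtain ⟨K, hK⟩ := hev.exists_forall_of_atTop
  obtain ⟨N, hN⟩ := exists_nat_ge ((K + 2) / α)
  have key : ∀ n : ℕ, N ≤ n → y ^ (c + α * n) / Gamma (b + α * n)
      ≤ (y ^ c * M ^ 2) * (1/2) ^ n := by
    intro n hn
    have hs2 : (K:ℝ) + 2 ≤ b + α * n := by
      have : ((K:ℝ) + 2) / α * α ≤ (n:ℝ) * α := by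
        apply mul_le_mul_of_nonneg_right _ hα.le
        exact hN.trans (by exact_mod_cast hn)
      rw [div_mul_cancel₀ _ hα.ne'] at this
      nlinarith
    have hs2' : (2:ℝ) ≤ b + α * n := by have : (0:ℝ) ≤ K := Nat.cast_nonneg K; linarith
    set m : ℕ := Nat.floor (b + α * n) - 1 with hm
    have hfl2 : 2 ≤ Nat.floor (b + α * n) := Nat.le_floor (by exact_mod_cast hs2')
    have hmK : K ≤ m := by
      have : (K:ℝ) + 2 ≤ Nat.floor (b + α * n) + 1 := hs2.trans (Nat.lt_floor_add_one _).le
      have : K + 2 ≤ Nat.floor (b + α * n) + 1 := by exact_mod_cast this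
      omega
    have hGam : (Nat.factorial m : ℝ) ≤ Gamma (b + α * n) := gamma_lb hs2'
    have hMm : M ^ m ≤ Nat.factorial m := by
      have := hK m hmK
      have hf : (0:ℝ) < Nat.factorial m := by exact_mod_cast Nat.factorial_pos m
      calc M ^ m = M ^ m / Nat.factorial m * Nat.factorial m := by field_simp
        _ ≤ 1 * Nat.factorial m := by apply mul_le_mul_of_nonneg_right this hf.le
        _ = Nat.factorial m := one_mul _
    have hmge : α * n - 2 ≤ (m : ℝ) := by
      have h1 : b + α * n - 1 < Nat.floor (b + α * n) := by
        have := Nat.lt_floor_add_one (b + α * n); linarith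
      have h2 : (m:ℝ) = (Nat.floor (b + α * n) : ℝ) - 1 := by
        have : (1:ℕ) ≤ Nat.floor (b + α * n) := by omega
        push_cast [hm, this]; ring
      linarith
    have hMlow : (2*r) ^ n / M ^ 2 ≤ M ^ m := by
      have e1 : M ^ (m:ℝ) = M ^ m := rpow_natCast M m
      have e2 : M ^ (α * n - 2) ≤ M ^ (m:ℝ) := rpow_le_rpow_of_exponent_le hM1 hmge
      have hM0 : (0:ℝ) < M := by linarith
      have e3 : (2*r) ^ n / M ^ 2 ≤ M ^ (α * n - 2) := by
        have p1 : (2*r) ^ n ≤ (M ^ α) ^ n := pow_le_pow_left₀ (by positivity) hMα n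
        have p2 : M ^ (α * (n:ℝ)) = (M ^ α) ^ n := by
          rw [rpow_mul hM0.le, rpow_natCast]
        rw [rpow_sub hM0, p2, rpow_two]
        gcongr
      calc (2*r) ^ n / M ^ 2 ≤ M ^ (α * n - 2) := e3
        _ ≤ M ^ (m:ℝ) := e2
        _ = M ^ m := e1
    have hGpos : 0 < Gamma (b + α * n) := Gamma_pos_of_pos (by linarith)
    have hnum : y ^ (c + α * n) = y ^ c * r ^ n := by
      rw [rpow_add hy, hr, ← rpow_natCast (y ^ α) n, ← rpow_mul hy.le]
    have hden : (2*r) ^ n / M ^ 2 ≤ Gamma (b + α * n) := le_trans hMlow (hMm.trans hGam)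
    have hdenpos : 0 < (2*r) ^ n / M ^ 2 := by positivity
    calc y ^ (c + α * n) / Gamma (b + α * n) ≤ y ^ (c + α * n) / ((2*r) ^ n / M ^ 2) :=
          div_le_div_of_nonneg_left (by positivity) hdenpos hden
      _ = (y ^ c * M ^ 2) * (1/2) ^ n := by
          rw [hnum, mul_pow]
          field_simp
          rw [← mul_pow]; norm_num
  rw [← summable_nat_add_iff N]
  refine Summable.of_nonneg_of_le (fun n => by positivity) (fun n => ?_)
    ((summable_geometric_of_lt_one (r := 1/2) (by norm_num) (by norm_num)).mul_left (y ^ c * M ^ 2))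
  have h1 := key (n + N) (by omega)
  have h2 : ((1:ℝ)/2) ^ (n + N) ≤ (1/2) ^ n :=
    pow_le_pow_of_le_one (by norm_num) (by norm_num) (by omega)
  have h3 : (0:ℝ) ≤ y ^ c * M ^ 2 := by positivity
  exact h1.trans (mul_le_mul_of_nonneg_left h2 h3)

lemma JeqOn {β x c : ℝ} (hx : 0 < x) : Set.EqOn (fun t : ℝ => (1-t) ^ (β-2) * (x*t) ^ c)
    (fun t : ℝ => x ^ c * (t ^ ((c+1)-1) * (1-t) ^ ((β-1)-1))) (Set.Icc 0 1) := by
  intro t ht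
  simp only
  rw [mul_rpow hx.le ht.1, show (c+1)-1 = c by ring, show (β-1)-1 = β-2 by ring]
  ring

lemma Jint {β x c : ℝ} (hβ : 1 < β) (hx : 0 < x) (hc : -1 < c) :
    IntegrableOn (fun t : ℝ => (1-t) ^ (β-2) * (x*t) ^ c) (Set.Ioc 0 1) := by
  have h := (betaIntgbl (u := c+1) (v := β-1) (by linarith) (by linarith)).const_mul (x ^ c)
  rw [intervalIntegrable_iff_integrableOn_Ioc_of_le (by norm_num)] at h
  exact h.congr_fun (fun t ht => (JeqOn (β := β) (c := c) hx (Set.Ioc_subset_Icc_self ht)).symm) measurableSet_Ioc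

lemma Jval {β x c : ℝ} (hβ : 1 < β) (hx : 0 < x) (hc : -1 < c) :
    ∫ t in Set.Ioc (0:ℝ) 1, (1-t) ^ (β-2) * (x*t) ^ c
      = x ^ c * (Gamma (c+1) * Gamma (β-1) / Gamma (β+c)) := by
  rw [← intervalIntegral.integral_of_le (by norm_num)]
  rw [intervalIntegral.integral_congr (g := fun t : ℝ =>
    x ^ c * (t ^ ((c+1)-1) * (1-t) ^ ((β-1)-1))) (by simpa [Set.uIcc_of_le] using JeqOn (β := β) (c := c) hx)]
  rw [intervalIntegral.integral_const_mul, betaVal (by linarith) (by linarith),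
    show c+1+(β-1) = β+c by ring]

/-- The function D_{α,β}(x) = ∑_{n≥1} x^{αn-1}/Γ(β+αn-1) − ∑_{n≥0} x^{αn}/Γ(β+αn). -/
noncomputable def Dab (α β x : ℝ) : ℝ :=
  (∑' n : ℕ, x ^ (α * (n + 1) - 1) / Real.Gamma (β + α * (n + 1) - 1)) -
    ∑' n : ℕ, x ^ (α * n) / Real.Gamma (β + α * n)

-- summability of the two Dab series, general β
lemma sum1 {α β y : ℝ} (hα : 0 < α) (hβ : 0 < β + α - 1) (hy : 0 < y) :
    Summable (fun n : ℕ => y ^ (α * (n + 1) - 1) / Gamma (β + α * (n + 1) - 1)) := by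
  refine (summableAux (α := α) (b := β + α - 1) (c := α - 1) hα hβ hy).congr (fun n => ?_)
  rw [show α - 1 + α * n = α * (n + 1) - 1 by ring, show β + α - 1 + α * n = β + α * (n+1) - 1 by ring]

lemma sum2 {α β y : ℝ} (hα : 0 < α) (hβ : 0 < β) (hy : 0 < y) :
    Summable (fun n : ℕ => y ^ (α * n) / Gamma (β + α * n)) := by
  refine (summableAux (α := α) (b := β) (c := 0) hα hβ hy).congr (fun n => ?_)
  rw [zero_add]

theorem Dab_beta_integral (α β x : ℝ) (hα : α ∈ Set.Ioo (0:ℝ) 1) (hβ : 1 < β)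
    (hx : 0 < x) :
    Dab α β x =
      (1 / Real.Gamma (β - 1)) * ∫ t in (0:ℝ)..1, (1 - t) ^ (β - 2) * Dab α 1 (x * t) := by
  obtain ⟨hα0, hα1⟩ := hα
  have hΓv : 0 < Gamma (β - 1) := Gamma_pos_of_pos (by linarith)
  set F : ℕ → ℝ → ℝ := fun n t => (1-t) ^ (β-2) * ((x*t) ^ (α * (n + 1) - 1) / Gamma (1 + α * (n + 1) - 1)) with hF
  set G : ℕ → ℝ → ℝ := fun n t => (1-t) ^ (β-2) * ((x*t) ^ (α * n) / Gamma (1 + α * n)) with hG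
  set H : ℕ → ℝ → ℝ := fun n t => F n t - G n t with hH
  have hc1 : ∀ n : ℕ, (-1:ℝ) < α * (n + 1) - 1 := fun n => by
    have : (0:ℝ) < α * (n+1) := by positivity
    linarith
  have hc2 : ∀ n : ℕ, (-1:ℝ) < α * n := fun n => by
    have : (0:ℝ) ≤ α * n := by positivity
    linarith
  have hΓ1 : ∀ n : ℕ, Gamma (1 + α * (n + 1) - 1) = Gamma ((α * (n+1) - 1) + 1) := fun n => by
    ring_nf
  have hΓ2 : ∀ n : ℕ, Gamma (1 + α * n) = Gamma ((α * n) + 1) := fun n => by ring_nf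
  have hΓpos1 : ∀ n : ℕ, 0 < Gamma ((α * (n+1) - 1) + 1) :=
    fun n => Gamma_pos_of_pos (by linarith [hc1 n])
  have hΓpos2 : ∀ n : ℕ, 0 < Gamma ((α * n) + 1) :=
    fun n => Gamma_pos_of_pos (by linarith [hc2 n])
  -- integrability
  have hFint : ∀ n, IntegrableOn (F n) (Set.Ioc (0:ℝ) 1) := by
    intro n
    have h2 : IntegrableOn (fun t : ℝ => (1-t) ^ (β-2) * (x*t) ^ (α * (n + 1) - 1) / Gamma (1 + α * (n + 1) - 1)) (Set.Ioc (0:ℝ) 1) :=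
      (Jint (c := α * (n+1) - 1) hβ hx (hc1 n)).div_const (Gamma (1 + α * (n + 1) - 1))
    exact h2.congr_fun (fun t ht => by simp [hF, mul_div_assoc]) measurableSet_Ioc
  have hGint : ∀ n, IntegrableOn (G n) (Set.Ioc (0:ℝ) 1) := by
    intro n
    have h2 : IntegrableOn (fun t : ℝ => (1-t) ^ (β-2) * (x*t) ^ (α * n) / Gamma (1 + α * n)) (Set.Ioc (0:ℝ) 1) :=
      (Jint (c := α * n) hβ hx (hc2 n)).div_const (Gamma (1 + α * n))
    exact h2.congr_fun (fun t ht => by simp [hG, mul_div_assoc]) measurableSet_Ioc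
  -- values
  have hFval : ∀ n, ∫ t in Set.Ioc (0:ℝ) 1, F n t
      = Gamma (β-1) * (x ^ (α * (n + 1) - 1) / Gamma (β + α * (n + 1) - 1)) := by
    intro n
    have h1 : ∫ t in Set.Ioc (0:ℝ) 1, F n t
        = (∫ t in Set.Ioc (0:ℝ) 1, (1-t) ^ (β-2) * (x*t) ^ (α * (n + 1) - 1)) / Gamma (1 + α * (n + 1) - 1) := by
      rw [← integral_div]
      exact setIntegral_congr_fun measurableSet_Ioc (fun t ht => by simp [hF, mul_div_assoc])
    rw [h1, Jval hβ hx (hc1 n), hΓ1 n,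
      show β + (α * ((n:ℝ)+1) - 1) = β + α * (n+1) - 1 by ring]
    have hβc : 0 < Gamma (β + α * (n + 1) - 1) := Gamma_pos_of_pos (by nlinarith [hc1 n])
    field_simp [(hΓpos1 n).ne']
    ring
    rw [mul_inv_cancel₀]; exact (Gamma_pos_of_pos (by positivity)).ne'
  have hGval : ∀ n, ∫ t in Set.Ioc (0:ℝ) 1, G n t
      = Gamma (β-1) * (x ^ (α * n) / Gamma (β + α * n)) := by
    intro n
    have h1 : ∫ t in Set.Ioc (0:ℝ) 1, G n t
        = (∫ t in Set.Ioc (0:ℝ) 1, (1-t) ^ (β-2) * (x*t) ^ (α * n)) / Gamma (1 + α * n) := by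
      rw [← integral_div]
      exact setIntegral_congr_fun measurableSet_Ioc (fun t ht => by simp [hG, mul_div_assoc])
    rw [h1, Jval hβ hx (hc2 n), hΓ2 n,
      show β + α * (n:ℝ) = β + α * n by ring]
    have hβc : 0 < Gamma (β + α * n) := Gamma_pos_of_pos (by nlinarith [hc2 n])
    field_simp [(hΓpos2 n).ne']
  -- nonnegativity on Ioc
  have hFnn : ∀ n, ∀ t ∈ Set.Ioc (0:ℝ) 1, 0 ≤ F n t := by
    intro n t ht
    have h1 : (0:ℝ) ≤ 1 - t := by linarith [ht.2]
    refine mul_nonneg (rpow_nonneg h1 _) (div_nonneg (rpow_nonneg (mul_nonneg hx.le ht.1.le) _) ?_)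
    rw [hΓ1 n]; exact (hΓpos1 n).le
  have hGnn : ∀ n, ∀ t ∈ Set.Ioc (0:ℝ) 1, 0 ≤ G n t := by
    intro n t ht
    have h1 : (0:ℝ) ≤ 1 - t := by linarith [ht.2]
    refine mul_nonneg (rpow_nonneg h1 _) (div_nonneg (rpow_nonneg (mul_nonneg hx.le ht.1.le) _) ?_)
    rw [hΓ2 n]; exact (hΓpos2 n).le
  -- summability of the value series
  have hS3 : Summable (fun n : ℕ => x ^ (α * (n + 1) - 1) / Gamma (β + α * (n + 1) - 1)) :=
    sum1 hα0 (by linarith) hx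
  have hS4 : Summable (fun n : ℕ => x ^ (α * n) / Gamma (β + α * n)) :=
    sum2 hα0 (by linarith) hx
  -- summability of ∫‖H n‖
  have hHint : ∀ n, IntegrableOn (H n) (Set.Ioc (0:ℝ) 1) := fun n => (hFint n).sub (hGint n)
  have hHnorm : ∀ n, ∫ t in Set.Ioc (0:ℝ) 1, ‖H n t‖
      ≤ Gamma (β-1) * (x ^ (α * (n + 1) - 1) / Gamma (β + α * (n + 1) - 1))
        + Gamma (β-1) * (x ^ (α * n) / Gamma (β + α * n)) := by
    intro n
    rw [← hFval n, ← hGval n, ← integral_add (hFint n) (hGint n)]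
    apply setIntegral_mono_on ((hHint n).norm) ((hFint n).add (hGint n)) measurableSet_Ioc
    intro t ht
    simp only [hH, Real.norm_eq_abs]
    have h2 : |F n t - G n t| ≤ |F n t| + |G n t| := abs_sub _ _
    rwa [abs_of_nonneg (hFnn n t ht), abs_of_nonneg (hGnn n t ht)] at h2
  have hHsum : Summable (fun n => ∫ t in Set.Ioc (0:ℝ) 1, ‖H n t‖) := by
    apply Summable.of_nonneg_of_le (fun n => integral_nonneg (fun t => norm_nonneg _)) hHnorm
    exact (hS3.mul_left _).add (hS4.mul_left _)
  -- swap integral and tsum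
  have hswap : ∑' n, ∫ t in Set.Ioc (0:ℝ) 1, H n t = ∫ t in Set.Ioc (0:ℝ) 1, ∑' n, H n t :=
    integral_tsum_of_summable_integral_norm hHint hHsum
  -- pointwise identity
  have hptw : Set.EqOn (fun t => (1 - t) ^ (β - 2) * Dab α 1 (x * t))
      (fun t => ∑' n, H n t) (Set.Ioc (0:ℝ) 1) := by
    intro t ht
    have hxt : 0 < x * t := mul_pos hx ht.1
    have hSF : Summable (fun n => F n t) :=
      (sum1 (β := (1:ℝ)) hα0 (by linarith) hxt).mul_left _
    have hSG : Summable (fun n => G n t) :=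
      (sum2 (β := (1:ℝ)) hα0 (by norm_num) hxt).mul_left _
    simp only [hF, hG, hH]
    show (1-t) ^ (β-2) * Dab α 1 (x*t) = _
    rw [Dab, mul_sub, ← tsum_mul_left, ← tsum_mul_left, ← Summable.tsum_sub hSF hSG]
  have hmain : (∫ t in (0:ℝ)..1, (1 - t) ^ (β - 2) * Dab α 1 (x * t))
      = Gamma (β-1) * Dab α β x := by
    rw [intervalIntegral.integral_of_le (by norm_num : (0:ℝ) ≤ 1),
      setIntegral_congr_fun measurableSet_Ioc hptw, ← hswap]
    have hHv : ∀ n : ℕ, ∫ t in Set.Ioc (0:ℝ) 1, H n t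
        = Gamma (β-1) * (x ^ (α * (n + 1) - 1) / Gamma (β + α * (n + 1) - 1))
          - Gamma (β-1) * (x ^ (α * n) / Gamma (β + α * n)) := by
      intro n
      simp only [hH]
      rw [integral_sub (hFint n) (hGint n), hFval n, hGval n]
    rw [tsum_congr hHv, Summable.tsum_sub (hS3.mul_left _) (hS4.mul_left _),
      tsum_mul_left, tsum_mul_left, Dab]
    ring
  rw [hmain]
  field_simp
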